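/- Let C and D be convex subsets of ℝⁿ. Then the nonempty faces of C ∩ D are exactly the nonempty sets of the form E ∩ F where E is a face of C and F is a face of D. -/

import Mathlib

open Set Metric RealInnerProductSpace

variable {E : Type*} [NormedAddCommGroup E] [NormedSpace ℝ E]

/-- A face of a convex set: a convex subset `F` of `C` such that any open segment of `C`
meeting `F` has both endpoints in `F`. -/
def IsFace (C F : Set E) : Prop := Convex ℝ F ∧ IsExtreme ℝ C F

/-- Dimension of a convex set: the dimension of its affine hull. -/
noncomputable def sdim (S : Set E) : ℕ := Module.finrank ℝ (affineSpan ℝ S).direction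

/-- The facial dimension signature: the set of dimensions of nonempty faces. -/
def faceDimSig (C : Set E) : Set ℕ :=
  {d | ∃ F : Set E, IsFace C F ∧ F.Nonempty ∧ sdim F = d}

/-- The minimal face of `C` containing `x`. -/
def minFace (C : Set E) (x : E) : Set E := ⋂₀ {F | IsFace C F ∧ x ∈ F}

/-- From an intrinsic interior point `x`, any segment from a point `y` of `G` can be extended
within `G` beyond `x`. -/
lemma exists_openSegment_of_intrinsicInterior {G : Set E} {x y : E}
    (hx : x ∈ intrinsicInterior ℝ G) (hy : y ∈ G) :
    ∃ z ∈ G, x ∈ openSegment ℝ y z := by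
  have hxG : x ∈ G := intrinsicInterior_subset hx
  rcases eq_or_ne y x with rfl | hne
  · exact ⟨y, hy, by rw [openSegment_same]; exact rfl⟩
  obtain ⟨x', hx', hx'val⟩ := mem_intrinsicInterior.1 hx
  obtain ⟨ε, hε, hball⟩ := Metric.mem_nhds_iff.1 (mem_interior_iff_mem_nhds.1 hx')
  have hxy : (0:ℝ) < ‖x - y‖ := by
    exact norm_pos_iff.mpr (sub_ne_zero.2 hne.symm)
  set δ : ℝ := ε / (2 * ‖x - y‖) with hδdef
  have hδ : 0 < δ := by positivity
  -- the extended point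
  set z : E := δ • (x - y) + x with hzdef
  have hyspan : y ∈ affineSpan ℝ G := subset_affineSpan ℝ G hy
  have hzspan : z ∈ affineSpan ℝ G := by
    have := AffineSubspace.smul_vsub_vadd_mem (affineSpan ℝ G) δ
      (x'.2) hyspan (x'.2)
    simpa [hx'val, vsub_eq_sub, vadd_eq_add] using this
  have hz : z ∈ G := by
    have hmem : (⟨z, hzspan⟩ : affineSpan ℝ G) ∈ Metric.ball x' ε := by
      rw [Metric.mem_ball, Subtype.dist_eq, hx'val, dist_eq_norm]
      have : z - x = δ • (x - y) := by simp [hzdef]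
      rw [this, norm_smul, Real.norm_eq_abs, abs_of_pos hδ, hδdef]
      rw [div_mul_eq_mul_div, mul_comm]
      rw [div_lt_iff₀ (by positivity)]
      nlinarith
    exact hball hmem
  refine ⟨z, hz, δ / (1 + δ), 1 / (1 + δ), by positivity, by positivity, ?_, ?_⟩
  · field_simp
    ring
  · rw [hzdef]
    match_scalars <;> field_simp <;> ring

/-- The explicit minimal face of `C` at `x` is a face of `C`. -/
lemma isFace_gen {C : Set E} (hC : Convex ℝ C) (x : E) :
    IsFace C {y | y ∈ C ∧ ∃ z ∈ C, x ∈ openSegment ℝ y z} := by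
  constructor
  · -- convexity
    rintro y₁ ⟨hy₁C, z₁, hz₁C, p₁, q₁, hp₁, hq₁, hpq₁, he₁⟩
      y₂ ⟨hy₂C, z₂, hz₂C, p₂, q₂, hp₂, hq₂, hpq₂, he₂⟩ a b ha hb hab
    rcases eq_or_lt_of_le ha with rfl | ha
    · simp only [zero_add] at hab; subst hab
      simpa using ⟨hy₂C, z₂, hz₂C, p₂, q₂, hp₂, hq₂, hpq₂, he₂⟩
    rcases eq_or_lt_of_le hb with rfl | hb
    · simp only [add_zero] at hab; subst hab
      simpa using ⟨hy₁C, z₁, hz₁C, p₁, q₁, hp₁, hq₁, hpq₁, he₁⟩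
    refine ⟨hC hy₁C hy₂C ha.le hb.le hab, ?_⟩
    set Dd : ℝ := a * q₁ / p₁ + b * q₂ / p₂ with hDd
    have hDpos : 0 < Dd := by positivity
    refine ⟨(a * q₁ / (p₁ * Dd)) • z₁ + (b * q₂ / (p₂ * Dd)) • z₂,
      hC hz₁C hz₂C (by positivity) (by positivity) ?_,
      1 / (1 + Dd), Dd / (1 + Dd), by positivity, by positivity, by field_simp, ?_⟩
    · have hDmul : Dd * (p₁ * p₂) = a * q₁ * p₂ + b * q₂ * p₁ := by
        rw [hDd]; field_simp
      rw [div_add_div _ _ (by positivity) (by positivity), div_eq_one_iff_eq (by positivity)]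
      linear_combination (-Dd) * hDmul
    · have key : (1 / (1 + Dd)) • (a • y₁ + b • y₂) +
          (Dd / (1 + Dd)) • ((a * q₁ / (p₁ * Dd)) • z₁ + (b * q₂ / (p₂ * Dd)) • z₂) =
          (a / ((1 + Dd) * p₁)) • (p₁ • y₁ + q₁ • z₁) +
          (b / ((1 + Dd) * p₂)) • (p₂ • y₂ + q₂ • z₂) := by
        match_scalars <;> field_simp <;> ring
      rw [key, he₁, he₂, ← add_smul]
      have hsum : a / ((1 + Dd) * p₁) + b / ((1 + Dd) * p₂) = 1 := by
        have h1 : 1 + Dd = a / p₁ + b / p₂ := by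
          rw [hDd]
          field_simp
          linear_combination a * p₂ * hpq₁ + b * p₁ * hpq₂ - p₁ * p₂ * hab
        rw [div_add_div _ _ (by positivity : (1+Dd)*p₁ ≠ 0) (by positivity : (1+Dd)*p₂ ≠ 0)]
        rw [div_eq_one_iff_eq (by positivity)]
        field_simp [h1]
        have h2 : Dd * (p₁ * p₂) = a * q₁ * p₂ + b * q₂ * p₁ := by
          rw [hDd]; field_simp
        linear_combination (-1) * h2 - a * p₂ * hpq₁ - b * p₁ * hpq₂ + p₁ * p₂ * hab
      rw [hsum, one_smul]
  · -- extremeness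
    constructor
    · exact fun y hy => hy.1
    · have main : ∀ x₁ ∈ C, ∀ x₂ ∈ C, ∀ p ∈ {y | y ∈ C ∧ ∃ z ∈ C, x ∈ openSegment ℝ y z},
          p ∈ openSegment ℝ x₁ x₂ → x₁ ∈ {y | y ∈ C ∧ ∃ z ∈ C, x ∈ openSegment ℝ y z} := by
        rintro x₁ hx₁ x₂ hx₂ p ⟨hpC, z, hzC, α, β, hα, hβ, hαβ, he⟩ ⟨γ, δ, hγ, hδ, hγδ, hseg⟩
        have h0 : (0:ℝ) < 1 - α * γ := by nlinarith
        refine ⟨hx₁, (α * δ / (1 - α * γ)) • x₂ + (β / (1 - α * γ)) • z, ?_, ?_⟩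
        · have h1 : 1 - α * γ = α * δ + β := by nlinarith
          refine hC hx₂ hzC (div_pos (by positivity) h0).le (div_pos hβ h0).le ?_
          rw [h1]; field_simp
        · refine ⟨α * γ, 1 - α * γ, by positivity, ?_, by ring, ?_⟩
          · nlinarith
          · have h1 : (1 - α * γ) ≠ 0 := by nlinarith
            have key : (α * γ) • x₁ + (1 - α * γ) •
                ((α * δ / (1 - α * γ)) • x₂ + (β / (1 - α * γ)) • z) =
                α • (γ • x₁ + δ • x₂) + β • z := by
              match_scalars <;> field_simp <;> ring
            rw [key, hseg, he]
      intro x₁ hx₁ x₂ hx₂ p hp hseg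
      exact main x₁ hx₁ x₂ hx₂ p hp hseg

theorem faces_of_inter {n : ℕ} (C D : Set (EuclideanSpace ℝ (Fin n)))
    (hC : Convex ℝ C) (hD : Convex ℝ D) :
    {F : Set (EuclideanSpace ℝ (Fin n)) | IsFace (C ∩ D) F ∧ F.Nonempty} =
      {G : Set (EuclideanSpace ℝ (Fin n)) |
        (∃ E' F', IsFace C E' ∧ IsFace D F' ∧ G = E' ∩ F') ∧ G.Nonempty} := by
  ext G
  simp only [mem_setOf_eq]
  constructor
  · rintro ⟨⟨hGconv, hGext⟩, hGne⟩
    refine ⟨?_, hGne⟩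
    obtain ⟨x, hx⟩ := hGne.intrinsicInterior hGconv
    have hxG : x ∈ G := intrinsicInterior_subset hx
    have hxCD : x ∈ C ∩ D := hGext.1 hxG
    refine ⟨{y | y ∈ C ∧ ∃ z ∈ C, x ∈ openSegment ℝ y z},
      {y | y ∈ D ∧ ∃ z ∈ D, x ∈ openSegment ℝ y z},
      isFace_gen hC x, isFace_gen hD x, ?_⟩
    apply Subset.antisymm
    · intro y hy
      obtain ⟨z, hzG, hseg⟩ := exists_openSegment_of_intrinsicInterior hx hy
      have hyCD := hGext.1 hy
      have hzCD := hGext.1 hzG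
      exact ⟨⟨hyCD.1, z, hzCD.1, hseg⟩, ⟨hyCD.2, z, hzCD.2, hseg⟩⟩
    · rintro y ⟨⟨hyC, z, hzC, a₁, b₁, ha₁, hb₁, hab₁, he₁⟩,
        ⟨hyD, w, hwD, a₂, b₂, ha₂, hb₂, hab₂, he₂⟩⟩
      set r : ℝ := max b₁ b₂ with hr
      have hr0 : 0 < r := lt_max_of_lt_left hb₁
      have hr1 : r < 1 := max_lt (by linarith) (by linarith)
      set p : EuclideanSpace ℝ (Fin n) := y + r⁻¹ • (x - y) with hp
      have hpC : p ∈ C := by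
        have h1 : p = (1 - b₁ / r) • y + (b₁ / r) • z := by
          have hxy : x - y = b₁ • (z - y) := by
            rw [← he₁]; match_scalars <;> linarith
          rw [hp, hxy]; match_scalars <;> field_simp <;> ring
        rw [h1]
        have hb₁r : b₁ / r ≤ 1 := by
          rw [div_le_one hr0]; exact le_max_left _ _
        exact hC hyC hzC (by linarith) (by positivity) (by ring)
      have hpD : p ∈ D := by
        have h1 : p = (1 - b₂ / r) • y + (b₂ / r) • w := by
          have hxy : x - y = b₂ • (w - y) := by
            rw [← he₂]; match_scalars <;> linarith
          rw [hp, hxy]; match_scalars <;> field_simp <;> ring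
        rw [h1]
        have hb₂r : b₂ / r ≤ 1 := by
          rw [div_le_one hr0]; exact le_max_right _ _
        exact hD hyD hwD (by linarith) (by positivity) (by ring)
      have hseg : x ∈ openSegment ℝ y p := by
        refine ⟨1 - r, r, by linarith, hr0, by ring, ?_⟩
        rw [hp]; match_scalars <;> field_simp <;> ring
      exact hGext.2 ⟨hyC, hyD⟩ ⟨hpC, hpD⟩ hxG hseg
  · rintro ⟨⟨E', F', ⟨hE'conv, hE'ext⟩, ⟨hF'conv, hF'ext⟩, rfl⟩, hne⟩
    refine ⟨⟨hE'conv.inter hF'conv, ?_, ?_⟩, hne⟩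
    · exact inter_subset_inter hE'ext.1 hF'ext.1
    · intro x₁ hx₁ x₂ hx₂ p hp hseg
      have h1 := hE'ext.2 hx₁.1 hx₂.1 hp.1 hseg
      have h3 := hF'ext.2 hx₁.2 hx₂.2 hp.2 hseg
      exact ⟨h1, h3⟩
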